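/- Let t ∈ ℤ with t ≥ 0. Let M be the ℂ-vector space with basis {m_k}_{k∈ℕ} and define linear endomorphisms E, F, H of M by E(m_k) = (−t−k)·m_{k−1} for k ≥ 1 and E(m₀) = 0, F(m_k) = (k+1)·m_{k+1}, H(m_k) = (−t−1−2k)·m_k. Then: (a) [H,E] = 2E, [H,F] = −2F, [E,F] = H; (b) m₀ is a highest weight vector of weight −t−1, i.e. E(m₀) = 0 and H(m₀) = (−t−1)·m₀, and the smallest E,F,H-invariant subspace containing m₀ is all of M; (c) M has no ℂ-subspace invariant under all of E, F, H other than 0 and M. Thus M is the irreducible Verma module of highest weight −t−1 (the global sections of the standard Harish-Chandra sheaf on ℂℙ¹ attached to the closed N-orbit). -/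

import Mathlib

/-- For t ≥ 0, the ℂ-vector space with basis {m_k}_{k∈ℕ} and
operators E(m_k) = (−t−k)m_{k−1} (E(m₀)=0), F(m_k) = (k+1)m_{k+1},
H(m_k) = (−t−1−2k)m_k satisfies the sl₂ relations, m₀ is a cyclic highest
weight vector of weight −t−1, and the module is irreducible: it is the
irreducible Verma module of highest weight −t−1. -/
theorem verma_module_irreducible (t : ℤ) (ht : 0 ≤ t)
    (E F H : (ℕ →₀ ℂ) →ₗ[ℂ] (ℕ →₀ ℂ))
    (m : ℕ → ℕ →₀ ℂ) (hm : ∀ k, m k = Finsupp.single k 1)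
    (hE0 : E (m 0) = 0)
    (hE : ∀ k : ℕ, E (m (k + 1)) = (-(t : ℂ) - (k + 1)) • m k)
    (hF : ∀ k : ℕ, F (m k) = ((k : ℂ) + 1) • m (k + 1))
    (hH : ∀ k : ℕ, H (m k) = (-(t : ℂ) - 1 - 2 * k) • m k) :
    -- (a) sl₂ relations
    (H ∘ₗ E - E ∘ₗ H = (2 : ℂ) • E ∧
     H ∘ₗ F - F ∘ₗ H = (-2 : ℂ) • F ∧
     E ∘ₗ F - F ∘ₗ E = H) ∧
    -- (b) m₀ is a highest weight vector of weight −t−1 generating the module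
    (E (m 0) = 0 ∧ H (m 0) = (-(t : ℂ) - 1) • m 0 ∧
     (∀ W : Submodule ℂ (ℕ →₀ ℂ), m 0 ∈ W →
        (∀ v ∈ W, E v ∈ W) → (∀ v ∈ W, F v ∈ W) → (∀ v ∈ W, H v ∈ W) →
        W = ⊤)) ∧
    -- (c) irreducibility
    (∀ W : Submodule ℂ (ℕ →₀ ℂ),
      (∀ v ∈ W, E v ∈ W) → (∀ v ∈ W, F v ∈ W) → (∀ v ∈ W, H v ∈ W) →
      W = ⊥ ∨ W = ⊤) := by
  -- restated basis facts
  have hE0' : E (Finsupp.single 0 (1:ℂ)) = 0 := by rw [← hm]; exact hE0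
  have hEs : ∀ k : ℕ, E (Finsupp.single (k+1) (1:ℂ))
      = (-(t:ℂ) - (k+1)) • Finsupp.single k (1:ℂ) := by
    intro k; rw [← hm, ← hm]; exact_mod_cast hE k
  have hFs : ∀ k : ℕ, F (Finsupp.single k (1:ℂ))
      = ((k:ℂ) + 1) • Finsupp.single (k+1) (1:ℂ) := by
    intro k; rw [← hm, ← hm]; exact hF k
  have hHs : ∀ k : ℕ, H (Finsupp.single k (1:ℂ))
      = (-(t:ℂ) - 1 - 2*k) • Finsupp.single k (1:ℂ) := by
    intro k; rw [← hm]; exact hH k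
  -- coefficient formula for E
  have hEcoeff : ∀ v : ℕ →₀ ℂ, ∀ j : ℕ, (E v) j = (-(t:ℂ) - (j+1)) * v (j+1) := by
    intro v
    induction v using Finsupp.induction_linear with
    | zero => simp
    | add f g hf hg => intro j; simp [hf j, hg j]; ring
    | single a b =>
      intro j
      have hb : Finsupp.single a b = b • Finsupp.single a (1:ℂ) := by
        rw [Finsupp.smul_single, smul_eq_mul, mul_one]
      rw [hb, map_smul]
      cases a with
      | zero => simp [hE0', Finsupp.single_apply]
      | succ k =>
        rw [hEs k]
        by_cases h : k = j
        · subst h; simp [mul_comm]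
        · simp [Finsupp.single_apply, h, fun hh => h (Nat.succ_injective hh)]
  have hne : ∀ j : ℕ, (-(t:ℂ) - (j+1)) ≠ 0 := by
    intro j
    have h1 : (-(t:ℂ) - (j+1)) = -(((t + j + 1 : ℤ) : ℂ)) := by push_cast; ring
    rw [h1, neg_ne_zero]
    exact_mod_cast (by omega : (t:ℤ) + j + 1 ≠ 0)
  -- cyclicity
  have key : ∀ (W : Submodule ℂ (ℕ →₀ ℂ)), m 0 ∈ W →
      (∀ v ∈ W, F v ∈ W) → W = ⊤ := by
    intro W h0 hFW
    have hall : ∀ k, m k ∈ W := by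
      intro k
      induction k with
      | zero => exact h0
      | succ k ih =>
        have h1 := hFW _ ih
        rw [hF k] at h1
        have h2 : m (k+1) = ((k:ℂ)+1)⁻¹ • (((k:ℂ)+1) • m (k+1)) := by
          rw [smul_smul, inv_mul_cancel₀ (Nat.cast_add_one_ne_zero k), one_smul]
        rw [h2]; exact W.smul_mem _ h1
    rw [eq_top_iff]
    intro x hx
    clear hx
    induction x using Finsupp.induction with
    | zero => exact W.zero_mem
    | single_add a b f _ _ ihf =>
      refine W.add_mem ?_ ihf
      have : Finsupp.single a b = b • m a := by
        rw [hm, Finsupp.smul_single, smul_eq_mul, mul_one]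
      rw [this]; exact W.smul_mem _ (hall a)
  -- descent : any nonzero vector generates m 0
  have descend : ∀ (W : Submodule ℂ (ℕ →₀ ℂ)), (∀ v ∈ W, E v ∈ W) →
      ∀ n : ℕ, ∀ v ∈ W, v ≠ 0 → (∀ j, n ≤ j → v j = 0) →
      Finsupp.single 0 (1:ℂ) ∈ W := by
    intro W hEW n
    induction n with
    | zero =>
      intro v _ hv0 hsupp
      exact absurd (Finsupp.ext fun j => hsupp j (Nat.zero_le j)) hv0
    | succ n ih =>
      intro v hv hv0 hsupp
      by_cases hz : ∀ j, 1 ≤ j → v j = 0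
      · have hv00 : v 0 ≠ 0 := by
          intro h
          apply hv0
          ext j
          cases j with
          | zero => exact h
          | succ j => exact hz (j+1) (Nat.succ_le_succ (Nat.zero_le j))
        have hveq : v = v 0 • Finsupp.single 0 (1:ℂ) := by
          ext j
          cases j with
          | zero => simp
          | succ j => simp [hz (j+1) (Nat.succ_le_succ (Nat.zero_le j)),
              Finsupp.single_apply]
        obtain ⟨c, hc0, hveq'⟩ : ∃ c : ℂ, c ≠ 0 ∧ v = c • Finsupp.single 0 (1:ℂ) :=
          ⟨v 0, hv00, hveq⟩
        have h3 := W.smul_mem c⁻¹ hv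
        rw [hveq', smul_smul, inv_mul_cancel₀ hc0, one_smul] at h3
        exact h3
      · push_neg at hz
        obtain ⟨j, hj1, hjv⟩ := hz
        obtain ⟨k, rfl⟩ := Nat.exists_eq_succ_of_ne_zero (by omega : j ≠ 0)
        apply ih (E v) (hEW v hv)
        · intro h
          apply hjv
          have h4 : (E v) k = 0 := by rw [h]; rfl
          rw [hEcoeff v k] at h4
          exact (mul_eq_zero.mp h4).resolve_left (hne k)
        · intro i hi
          rw [hEcoeff, hsupp (i+1) (by omega), mul_zero]
  refine ⟨⟨?_, ?_, ?_⟩, ⟨hE0, by simpa using hH 0, ?_⟩, ?_⟩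
  -- [H,E] = 2E
  · apply Finsupp.lhom_ext
    intro a b
    have hb : Finsupp.single a b = b • Finsupp.single a (1:ℂ) := by
      rw [Finsupp.smul_single, smul_eq_mul, mul_one]
    rw [hb]
    simp only [LinearMap.sub_apply, LinearMap.comp_apply, LinearMap.smul_apply, map_smul]
    cases a with
    | zero =>
      rw [hE0', hHs, map_smul, hE0']
      simp
    | succ k =>
      rw [hEs, hHs, map_smul, map_smul, hHs, hEs]
      push_cast
      module
  -- [H,F] = -2F
  · apply Finsupp.lhom_ext
    intro a b
    have hb : Finsupp.single a b = b • Finsupp.single a (1:ℂ) := by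
      rw [Finsupp.smul_single, smul_eq_mul, mul_one]
    rw [hb]
    simp only [LinearMap.sub_apply, LinearMap.comp_apply, LinearMap.smul_apply, map_smul]
    rw [hFs, hHs, map_smul, map_smul, hHs, hFs]
    push_cast
    module
  -- [E,F] = H
  · apply Finsupp.lhom_ext
    intro a b
    have hb : Finsupp.single a b = b • Finsupp.single a (1:ℂ) := by
      rw [Finsupp.smul_single, smul_eq_mul, mul_one]
    rw [hb]
    simp only [LinearMap.sub_apply, LinearMap.comp_apply, map_smul]
    cases a with
    | zero =>
      rw [hFs, hE0', map_smul, hEs, hHs, map_zero]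
      push_cast
      module
    | succ k =>
      rw [hFs, hEs, map_smul, map_smul, hEs, hFs, hHs]
      push_cast
      module
  -- (b) cyclicity
  · intro W h0 _ hFW _
    exact key W h0 hFW
  -- (c) irreducibility
  · intro W hEW hFW _
    by_cases hbot : W = ⊥
    · exact Or.inl hbot
    · right
      obtain ⟨v, hv, hv0⟩ := Submodule.exists_mem_ne_zero_of_ne_bot hbot
      have h0 : Finsupp.single 0 (1:ℂ) ∈ W := by
        refine descend W hEW (v.support.sup id + 1) v hv hv0 ?_
        intro j hj
        rw [← Finsupp.notMem_support_iff]
        intro hmem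
        have := Finset.le_sup (f := id) hmem
        simp only [id] at this
        omega
      rw [← hm] at h0
      exact key W h0 hFW
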